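/- There exists an n-uniform hypergraph H, whose vertices can be arranged in a rooted binary tree T_H with every hyperedge being a level-descending path in T_H, such that every full branch (root-to-leaf path) of T_H contains a hyperedge of H, and every hyperedge of H intersects at most 2^(n-2) + 2^(n-3) other hyperedges. -/

import Mathlib

/-- The finset of all boolean lists of length `k` (nodes on level `k` of the
complete infinite rooted binary tree). -/
def listsOfLen : ℕ → Finset (List Bool)
  | 0 => {[]}
  | k+1 => (listsOfLen k).image (· ++ [true]) ∪ (listsOfLen k).image (· ++ [false])

/-- The vertex set of the full branch (root-to-`l` path) ending at the node `l`. -/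
def prefixesF (l : List Bool) : Finset (List Bool) :=
  (Finset.range (l.length + 1)).image (fun i => l.take i)

/-- The vertex set of the level-descending path starting at node `p` and
ending at node `p ++ q`. -/
def pathFinset (p q : List Bool) : Finset (List Bool) :=
  (Finset.range (q.length + 1)).image (fun i => p ++ q.take i)

/-- `S` is (the node set of) a rooted binary tree: it contains the root, is
prefix-closed, and every node has either zero or two children. -/
def IsBinTree (S : Finset (List Bool)) : Prop :=
  [] ∈ S ∧ (∀ l ∈ S, ∀ p : List Bool, p <+: l → p ∈ S) ∧
    ∀ l ∈ S, ((l ++ [true]) ∈ S ↔ (l ++ [false]) ∈ S)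

/-- `l` is a leaf of the tree `S`. -/
def IsLeaf (S : Finset (List Bool)) (l : List Bool) : Prop :=
  l ∈ S ∧ (l ++ [true]) ∉ S ∧ (l ++ [false]) ∉ S

/-- The edge `e` is a level-descending path inside the tree `S`. -/
def InTree (S : Finset (List Bool)) (e : Finset (List Bool)) : Prop :=
  ∃ p q : List Bool, (p ++ q) ∈ S ∧ e = pathFinset p q

lemma mem_listsOfLen {k : ℕ} {l : List Bool} : l ∈ listsOfLen k ↔ l.length = k := by
  induction k generalizing l with
  | zero => simp [listsOfLen, List.length_eq_zero_iff]
  | succ k ih =>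
    simp only [listsOfLen, Finset.mem_union, Finset.mem_image]
    constructor
    · rintro (⟨a, ha, rfl⟩ | ⟨a, ha, rfl⟩) <;> simp [ih.1 ha]
    · intro hl
      rcases List.eq_nil_or_concat l with rfl | ⟨L, b, rfl⟩
      · simp at hl
      · have hL : L.length = k := by simpa [List.concat_eq_append] using hl
        cases b
        · right; exact ⟨L, ih.2 hL, by simp [List.concat_eq_append]⟩
        · left; exact ⟨L, ih.2 hL, by simp [List.concat_eq_append]⟩

lemma card_listsOfLen (k : ℕ) : (listsOfLen k).card = 2 ^ k := by
  induction k with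
  | zero => simp [listsOfLen]
  | succ k ih =>
    rw [listsOfLen, Finset.card_union_of_disjoint, Finset.card_image_of_injective,
      Finset.card_image_of_injective, ih, pow_succ]
    · ring
    · exact fun a b h => by simpa using List.append_inj' h rfl |>.1
    · exact fun a b h => by simpa using List.append_inj' h rfl |>.1
    · rw [Finset.disjoint_left]
      rintro x hx hy
      simp only [Finset.mem_image] at hx hy
      obtain ⟨a, -, rfl⟩ := hx
      obtain ⟨b, -, hb⟩ := hy
      have := (List.append_inj' hb rfl).2
      simp at this

lemma mem_pathFinset {x p q : List Bool} :
    x ∈ pathFinset p q ↔ ∃ i, i ≤ q.length ∧ x = p ++ q.take i := by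
  simp only [pathFinset, Finset.mem_image, Finset.mem_range, Nat.lt_succ_iff]
  tauto

lemma mem_pathFinset_prefix {x p q : List Bool} (hx : x ∈ pathFinset p q) :
    x <+: p ++ q ∧ p.length ≤ x.length := by
  obtain ⟨i, hi, rfl⟩ := mem_pathFinset.1 hx
  constructor
  · exact (List.prefix_append_right_inj p).2 (List.take_prefix i q)
  · simp

lemma bottom_mem_pathFinset (p q : List Bool) : p ++ q ∈ pathFinset p q :=
  mem_pathFinset.2 ⟨q.length, le_rfl, by simp⟩

lemma card_pathFinset (p q : List Bool) : (pathFinset p q).card = q.length + 1 := by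
  rw [pathFinset, Finset.card_image_of_injOn, Finset.card_range]
  intro i hi j hj hij
  simp only [Finset.mem_coe, Finset.mem_range, Nat.lt_succ_iff] at hi hj
  have := congrArg List.length hij
  simp only [List.length_append, List.length_take] at this
  omega

lemma inter_take_eq {p q p' q' : List Bool}
    (h : ((pathFinset p q) ∩ (pathFinset p' q')).Nonempty) (K : ℕ)
    (hK : K ≤ max p.length p'.length) :
    (p ++ q).take K = (p' ++ q').take K := by
  obtain ⟨x, hx⟩ := h
  rw [Finset.mem_inter] at hx
  obtain ⟨h1, hl1⟩ := mem_pathFinset_prefix hx.1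
  obtain ⟨h2, hl2⟩ := mem_pathFinset_prefix hx.2
  have e1 : x = (p ++ q).take x.length := List.prefix_iff_eq_take.1 h1
  have e2 : x = (p' ++ q').take x.length := List.prefix_iff_eq_take.1 h2
  have hKx : K ≤ x.length := le_trans hK (by omega)
  calc (p ++ q).take K = ((p ++ q).take x.length).take K := by
        rw [List.take_take, min_eq_left hKx]
    _ = ((p' ++ q').take x.length).take K := by rw [← e1, ← e2]
    _ = (p' ++ q').take K := by rw [List.take_take, min_eq_left hKx]

lemma take_app_len {K : ℕ} {l r : List Bool} (h : l.length = K) : (l ++ r).take K = l := by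
  subst h; exact List.take_left

section Edges
variable (n : ℕ)

/-- Type 1 edge: levels `[2, n+1]`, bottom `a ++ b ++ [true]`. -/
def E1e (a b : List Bool) : Finset (List Bool) := pathFinset a (b ++ [true])
/-- Type 2 edge: levels `[n, 2n-1]`, bottom `u ++ [false, true] ++ y`. -/
def E2e (u y : List Bool) : Finset (List Bool) := pathFinset u ([false, true] ++ y)
/-- Type 3 edge: levels `[n+1, 2n]`, bottom `u ++ [false, false] ++ z`. -/
def E3e (u z : List Bool) : Finset (List Bool) := pathFinset (u ++ [false]) ([false] ++ z)

end Edges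

section Inter
variable {n : ℕ}
variable {a b a' b' u y u' y' z z' : List Bool}

lemma inter11 (ha : a.length = 2) (ha' : a'.length = 2)
    (h : (E1e a b ∩ E1e a' b').Nonempty) : a = a' := by
  have := inter_take_eq h 2 (by omega)
  rwa [take_app_len ha, take_app_len ha'] at this

lemma inter12 (hn : 3 ≤ n) (ha : a.length = 2) (hb : b.length = n - 2) (hu' : u'.length = n)
    (h : (E1e a b ∩ E2e u' y').Nonempty) : a ++ b = u' := by
  have := inter_take_eq h n (by omega)
  rw [show a ++ (b ++ [true]) = (a ++ b) ++ [true] by simp] at this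
  rwa [take_app_len (show (a ++ b).length = n by simp [ha, hb]; omega),
    take_app_len hu'] at this

lemma inter13 (hn : 3 ≤ n) (ha : a.length = 2) (hb : b.length = n - 2) (hu' : u'.length = n)
    (h : (E1e a b ∩ E3e u' z').Nonempty) : False := by
  have h1 := inter_take_eq h (n+1) (by simp [hu'])
  rw [List.take_of_length_le (show (a ++ (b ++ [true])).length ≤ n + 1 by simp [ha, hb]; omega),
    take_app_len (show (u' ++ [false]).length = n + 1 by simp [hu']),
    show a ++ (b ++ [true]) = (a ++ b) ++ [true] by simp] at h1
  exact absurd (List.append_inj' h1 (by simp)).2 (by simp)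

lemma inter22 (hu : u.length = n) (hu' : u'.length = n)
    (h : (E2e u y ∩ E2e u' y').Nonempty) : u = u' := by
  have := inter_take_eq h n (by omega)
  rwa [take_app_len hu, take_app_len hu'] at this

lemma inter23 (hu : u.length = n) (hu' : u'.length = n)
    (h : (E2e u y ∩ E3e u' z').Nonempty) : u = u' := by
  have := inter_take_eq h (n+1) (by simp [hu'])
  rw [show u ++ ([false, true] ++ y) = (u ++ [false]) ++ ([true] ++ y) by simp] at this
  rw [take_app_len (show (u ++ [false]).length = n + 1 by simp [hu]),
    take_app_len (show (u' ++ [false]).length = n + 1 by simp [hu'])] at this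
  exact (List.append_inj' this (by simp)).1

lemma inter33 (hu : u.length = n) (hu' : u'.length = n)
    (h : (E3e u z ∩ E3e u' z').Nonempty) : u = u' := by
  have := inter_take_eq h (n+1) (by simp [hu'])
  rw [take_app_len (show (u ++ [false]).length = n + 1 by simp [hu]),
    take_app_len (show (u' ++ [false]).length = n + 1 by simp [hu'])] at this
  exact (List.append_inj' this (by simp)).1

end Inter

/-- The edge set of the construction. -/
def ED (n : ℕ) : Finset (Finset (List Bool)) :=
  ((listsOfLen 2 ×ˢ listsOfLen (n-2)).image fun ab => E1e ab.1 ab.2) ∪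
  ((listsOfLen n ×ˢ listsOfLen (n-3)).image fun uy => E2e uy.1 uy.2) ∪
  ((listsOfLen n ×ˢ listsOfLen (n-2)).image fun uz => E3e uz.1 uz.2)

lemma mem_ED {n : ℕ} {e : Finset (List Bool)} :
    e ∈ ED n ↔ (∃ a b : List Bool, a.length = 2 ∧ b.length = n - 2 ∧ e = E1e a b) ∨
      (∃ u y : List Bool, u.length = n ∧ y.length = n - 3 ∧ e = E2e u y) ∨
      (∃ u z : List Bool, u.length = n ∧ z.length = n - 2 ∧ e = E3e u z) := by
  simp only [ED, Finset.mem_union, Finset.mem_image, Finset.mem_product, Prod.exists,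
    mem_listsOfLen]
  constructor
  · rintro ((⟨a, b, ⟨h1, h2⟩, rfl⟩ | ⟨u, y, ⟨h1, h2⟩, rfl⟩) | ⟨u, z, ⟨h1, h2⟩, rfl⟩)
    · exact Or.inl ⟨a, b, h1, h2, rfl⟩
    · exact Or.inr (Or.inl ⟨u, y, h1, h2, rfl⟩)
    · exact Or.inr (Or.inr ⟨u, z, h1, h2, rfl⟩)
  · rintro (⟨a, b, h1, h2, rfl⟩ | ⟨u, y, h1, h2, rfl⟩ | ⟨u, z, h1, h2, rfl⟩)
    · exact Or.inl (Or.inl ⟨a, b, ⟨h1, h2⟩, rfl⟩)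
    · exact Or.inl (Or.inr ⟨u, y, ⟨h1, h2⟩, rfl⟩)
    · exact Or.inr ⟨u, z, ⟨h1, h2⟩, rfl⟩

lemma nbr_bound {n : ℕ} (hn : 3 ≤ n) (e : Finset (List Bool)) (he : e ∈ ED n) :
    ((ED n).filter fun f => f ≠ e ∧ (e ∩ f).Nonempty).card ≤ 2 ^ (n - 2) + 2 ^ (n - 3) := by
  rcases mem_ED.1 he with ⟨a, b, ha, hb, rfl⟩ | ⟨u, y, hu, hy, rfl⟩ | ⟨u, z, hu, hz, rfl⟩
  · -- Type 1 edge
    set sup : Finset (Finset (List Bool)) :=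
      ((listsOfLen (n-2)).image fun b' => E1e a b') ∪
      ((listsOfLen (n-3)).image fun y' => E2e (a ++ b) y') with hsup
    have hesup : E1e a b ∈ sup := by
      exact Finset.mem_union_left _ (Finset.mem_image_of_mem _ (mem_listsOfLen.2 hb))
    have hsub : ((ED n).filter fun f => f ≠ E1e a b ∧ (E1e a b ∩ f).Nonempty) ⊆
        sup.erase (E1e a b) := by
      intro f hf
      rw [Finset.mem_filter] at hf
      obtain ⟨hfE, hne, hint⟩ := hf
      rw [Finset.mem_erase]
      refine ⟨hne, ?_⟩
      rcases mem_ED.1 hfE with ⟨a', b', ha', hb', rfl⟩ | ⟨u', y', hu', hy', rfl⟩ |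
        ⟨u', z', hu', hz', rfl⟩
      · have : a = a' := inter11 ha ha' hint
        subst this
        exact Finset.mem_union_left _ (Finset.mem_image_of_mem _ (mem_listsOfLen.2 hb'))
      · have : a ++ b = u' := inter12 hn ha hb hu' hint
        subst this
        exact Finset.mem_union_right _ (Finset.mem_image_of_mem _ (mem_listsOfLen.2 hy'))
      · exact absurd hint (by intro h; exact inter13 hn ha hb hu' h)
    have h1 := Finset.card_le_card hsub
    rw [Finset.card_erase_of_mem hesup] at h1
    have h2 : sup.card ≤ 2 ^ (n-2) + 2 ^ (n-3) := by
      refine le_trans (Finset.card_union_le _ _) ?_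
      have i1 : ((listsOfLen (n-2)).image fun b' => E1e a b').card ≤ 2 ^ (n-2) :=
        le_trans Finset.card_image_le (le_of_eq (card_listsOfLen _))
      have i2 : ((listsOfLen (n-3)).image fun y' => E2e (a ++ b) y').card ≤ 2 ^ (n-3) :=
        le_trans Finset.card_image_le (le_of_eq (card_listsOfLen _))
      omega
    generalize 2^(n-3) = A at *
    generalize 2^(n-2) = B at *
    omega
  · -- Type 2 edge
    set sup : Finset (Finset (List Bool)) :=
      ({E1e (u.take 2) (u.drop 2)} : Finset (Finset (List Bool))) ∪
      ((listsOfLen (n-3)).image fun y' => E2e u y') ∪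
      ((listsOfLen (n-2)).image fun z' => E3e u z') with hsup
    have hesup : E2e u y ∈ sup := by
      exact Finset.mem_union_left _ (Finset.mem_union_right _
        (Finset.mem_image_of_mem _ (mem_listsOfLen.2 hy)))
    have hsub : ((ED n).filter fun f => f ≠ E2e u y ∧ (E2e u y ∩ f).Nonempty) ⊆
        sup.erase (E2e u y) := by
      intro f hf
      rw [Finset.mem_filter] at hf
      obtain ⟨hfE, hne, hint⟩ := hf
      rw [Finset.mem_erase]
      refine ⟨hne, ?_⟩
      rcases mem_ED.1 hfE with ⟨a', b', ha', hb', rfl⟩ | ⟨u', y', hu', hy', rfl⟩ |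
        ⟨u', z', hu', hz', rfl⟩
      · have hint' : (E1e a' b' ∩ E2e u y).Nonempty := by
          rwa [Finset.inter_comm] at hint
        have habu : a' ++ b' = u := inter12 hn ha' hb' hu hint'
        have ha2 : u.take 2 = a' := by rw [← habu]; exact List.take_left' ha'
        have hb2 : u.drop 2 = b' := by rw [← habu]; exact List.drop_left' ha'
        rw [← ha2, ← hb2]
        exact Finset.mem_union_left _ (Finset.mem_union_left _ (Finset.mem_singleton_self _))
      · have : u = u' := inter22 hu hu' hint
        subst this
        exact Finset.mem_union_left _ (Finset.mem_union_right _
          (Finset.mem_image_of_mem _ (mem_listsOfLen.2 hy')))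
      · have : u = u' := inter23 hu hu' hint
        subst this
        exact Finset.mem_union_right _ (Finset.mem_image_of_mem _ (mem_listsOfLen.2 hz'))
    have h1 := Finset.card_le_card hsub
    rw [Finset.card_erase_of_mem hesup] at h1
    have h2 : sup.card ≤ 1 + 2 ^ (n-3) + 2 ^ (n-2) := by
      refine le_trans (Finset.card_union_le _ _) ?_
      have h3 := Finset.card_union_le ({E1e (u.take 2) (u.drop 2)} :
        Finset (Finset (List Bool))) ((listsOfLen (n-3)).image fun y' => E2e u y')
      have i1 : ((listsOfLen (n-3)).image fun y' => E2e u y').card ≤ 2 ^ (n-3) :=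
        le_trans Finset.card_image_le (le_of_eq (card_listsOfLen _))
      have i2 : ((listsOfLen (n-2)).image fun z' => E3e u z').card ≤ 2 ^ (n-2) :=
        le_trans Finset.card_image_le (le_of_eq (card_listsOfLen _))
      simp only [Finset.card_singleton] at h3
      omega
    have hpos : 0 < 2 ^ (n-3) := Nat.pow_pos (by norm_num)
    generalize 2^(n-3) = A at *
    generalize 2^(n-2) = B at *
    omega
  · -- Type 3 edge
    set sup : Finset (Finset (List Bool)) :=
      ((listsOfLen (n-3)).image fun y' => E2e u y') ∪
      ((listsOfLen (n-2)).image fun z' => E3e u z') with hsup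
    have hesup : E3e u z ∈ sup := by
      exact Finset.mem_union_right _ (Finset.mem_image_of_mem _ (mem_listsOfLen.2 hz))
    have hsub : ((ED n).filter fun f => f ≠ E3e u z ∧ (E3e u z ∩ f).Nonempty) ⊆
        sup.erase (E3e u z) := by
      intro f hf
      rw [Finset.mem_filter] at hf
      obtain ⟨hfE, hne, hint⟩ := hf
      rw [Finset.mem_erase]
      refine ⟨hne, ?_⟩
      rcases mem_ED.1 hfE with ⟨a', b', ha', hb', rfl⟩ | ⟨u', y', hu', hy', rfl⟩ |
        ⟨u', z', hu', hz', rfl⟩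
      · have hint' : (E1e a' b' ∩ E3e u z).Nonempty := by
          rwa [Finset.inter_comm] at hint
        exact absurd hint' (by intro h; exact inter13 hn ha' hb' hu h)
      · have hint' : (E2e u' y' ∩ E3e u z).Nonempty := by
          rwa [Finset.inter_comm] at hint
        have : u' = u := inter23 hu' hu hint'
        subst this
        exact Finset.mem_union_left _ (Finset.mem_image_of_mem _ (mem_listsOfLen.2 hy'))
      · have : u = u' := inter33 hu hu' hint
        subst this
        exact Finset.mem_union_right _ (Finset.mem_image_of_mem _ (mem_listsOfLen.2 hz'))
    have h1 := Finset.card_le_card hsub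
    rw [Finset.card_erase_of_mem hesup] at h1
    have h2 : sup.card ≤ 2 ^ (n-3) + 2 ^ (n-2) := by
      refine le_trans (Finset.card_union_le _ _) ?_
      have i1 : ((listsOfLen (n-3)).image fun y' => E2e u y').card ≤ 2 ^ (n-3) :=
        le_trans Finset.card_image_le (le_of_eq (card_listsOfLen _))
      have i2 : ((listsOfLen (n-2)).image fun z' => E3e u z').card ≤ 2 ^ (n-2) :=
        le_trans Finset.card_image_le (le_of_eq (card_listsOfLen _))
      omega
    generalize 2^(n-3) = A at *
    generalize 2^(n-2) = B at *
    omega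

/-- The tree: complete binary tree of depth `2n`. -/
def SD (n : ℕ) : Finset (List Bool) := (Finset.range (2*n+1)).biUnion listsOfLen

lemma mem_SD {n : ℕ} {l : List Bool} : l ∈ SD n ↔ l.length ≤ 2*n := by
  simp only [SD, Finset.mem_biUnion, Finset.mem_range, mem_listsOfLen]
  constructor
  · rintro ⟨i, hi, rfl⟩; omega
  · intro h; exact ⟨l.length, by omega, rfl⟩

lemma mem_prefixesF {x l : List Bool} : x ∈ prefixesF l ↔ x <+: l := by
  simp only [prefixesF, Finset.mem_image, Finset.mem_range, Nat.lt_succ_iff]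
  constructor
  · rintro ⟨i, hi, rfl⟩; exact List.take_prefix i l
  · intro h
    exact ⟨x.length, h.length_le, (List.prefix_iff_eq_take.1 h).symm⟩

lemma isBinTree_SD (n : ℕ) : IsBinTree (SD n) := by
  refine ⟨mem_SD.2 (by simp), ?_, ?_⟩
  · intro l hl p hp
    exact mem_SD.2 (le_trans hp.length_le (mem_SD.1 hl))
  · intro l _
    simp only [mem_SD, List.length_append, List.length_singleton]

lemma pathFinset_subset_prefixesF {p q l : List Bool} (h : p ++ q <+: l) :
    pathFinset p q ⊆ prefixesF l := by
  intro x hx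
  exact mem_prefixesF.2 ((mem_pathFinset_prefix hx).1.trans h)

/-- There is an `n`-uniform hypergraph arranged on a rooted binary tree, all of
whose hyperedges are level-descending paths, such that every full branch contains
a hyperedge and every hyperedge intersects at most `2^(n-2) + 2^(n-3)` others. -/
theorem tree_hypergraph_small_neighborhood (n : ℕ) (hn : 3 ≤ n) :
    ∃ (S : Finset (List Bool)) (E : Finset (Finset (List Bool))),
      IsBinTree S ∧ (∀ e ∈ E, InTree S e) ∧ (∀ e ∈ E, e.card = n) ∧
      (∀ l : List Bool, IsLeaf S l → ∃ e ∈ E, e ⊆ prefixesF l) ∧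
      (∀ e ∈ E, ((E.filter fun f => f ≠ e ∧ (e ∩ f).Nonempty).card)
          ≤ 2 ^ (n - 2) + 2 ^ (n - 3)) := by
  refine ⟨SD n, ED n, isBinTree_SD n, ?_, ?_, ?_, fun e he => nbr_bound hn e he⟩
  · -- InTree
    intro e he
    rcases mem_ED.1 he with ⟨a, b, ha, hb, rfl⟩ | ⟨u, y, hu, hy, rfl⟩ | ⟨u, z, hu, hz, rfl⟩
    · exact ⟨a, b ++ [true], mem_SD.2 (by simp [ha, hb]; omega), rfl⟩
    · exact ⟨u, [false, true] ++ y, mem_SD.2 (by simp [hu, hy]; omega), rfl⟩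
    · exact ⟨u ++ [false], [false] ++ z, mem_SD.2 (by simp [hu, hz]; omega), rfl⟩
  · -- cards
    intro e he
    rcases mem_ED.1 he with ⟨a, b, ha, hb, rfl⟩ | ⟨u, y, hu, hy, rfl⟩ | ⟨u, z, hu, hz, rfl⟩
    · rw [E1e, card_pathFinset]; simp [hb]; omega
    · rw [E2e, card_pathFinset]; simp [hy]; omega
    · rw [E3e, card_pathFinset]; simp [hz]; omega
  · -- coverage
    intro l hl
    obtain ⟨hlS, hlt, _⟩ := hl
    have hlen : l.length = 2*n := by
      have h1 := mem_SD.1 hlS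
      by_contra hne
      exact hlt (mem_SD.2 (by simp; omega))
    have hu : (l.take n).length = n := by simp [hlen]; omega
    have hr : (l.drop n).length = n := by simp [hlen]; omega
    obtain ⟨b, c, rest, hbc⟩ : ∃ b c rest, l.drop n = b :: c :: rest := by
      rcases hd : l.drop n with _ | ⟨b, _ | ⟨c, rest⟩⟩
      · rw [hd] at hr; exact absurd hr (by simp; omega)
      · rw [hd] at hr; exact absurd hr (by simp; omega)
      · exact ⟨b, c, rest, rfl⟩
    have hrest : rest.length = n - 2 := by rw [hbc] at hr; simp at hr; omega
    have hdec : l.take n ++ (b :: c :: rest) = l := by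
      rw [← hbc]; exact List.take_append_drop n l
    cases b
    · cases c
      · -- false, false : type 3 edge, bottom = l
        refine ⟨E3e (l.take n) rest, mem_ED.2 (Or.inr (Or.inr ⟨l.take n, rest, hu, hrest,
          rfl⟩)), ?_⟩
        refine pathFinset_subset_prefixesF ?_
        have h5 : (l.take n ++ [false]) ++ ([false] ++ rest) = l := by
          rw [List.append_assoc]; exact hdec
        rw [h5]
      · -- false, true : type 2 edge
        refine ⟨E2e (l.take n) (rest.take (n-3)), mem_ED.2 (Or.inr (Or.inl ⟨l.take n,
          rest.take (n-3), hu, by simp [hrest]; omega, rfl⟩)), ?_⟩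
        refine pathFinset_subset_prefixesF ?_
        have h4 : l.take n ++ ([false, true] ++ rest.take (n-3)) <+:
            l.take n ++ ([false, true] ++ rest) :=
          (List.prefix_append_right_inj _).2 ((List.prefix_append_right_inj _).2
            (List.take_prefix _ _))
        have h5 : l.take n ++ ([false, true] ++ rest) = l := hdec
        rwa [h5] at h4
    · -- true : type 1 edge
      refine ⟨E1e ((l.take n).take 2) ((l.take n).drop 2), mem_ED.2 (Or.inl ⟨(l.take n).take 2,
        (l.take n).drop 2, by simp [hu]; omega, by simp [hu], rfl⟩), ?_⟩
      refine pathFinset_subset_prefixesF ?_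
      have h2 : (l.take n).take 2 ++ ((l.take n).drop 2 ++ [true]) = l.take n ++ [true] := by
        rw [← List.append_assoc, List.take_append_drop]
      have h4 : l.take n ++ [true] <+: l.take n ++ true :: c :: rest :=
        (List.prefix_append_right_inj _).2 ⟨c :: rest, rfl⟩
      rw [h2]
      rwa [hdec] at h4
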